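/- For a nonzero f ∈ S_d with leading monomial m_α with respect to <_γ, the leading (maximal weight with respect to γ) basis wedge appearing in the Plücker coordinates of the subspace span{m·f : m ∈ M_D} ⊂ S_{d+D} is ⋀_{i=1}^{|M_D|} (m_{i,D}·m_α), and its total weight equals |M_D|·⟨γ, exp(m_α)⟩ + ⟨γ, Σ_i exp(m_{i,D})⟩. -/

import Mathlib

open MvPolynomial

noncomputable def wt (r : ℕ) (γ : Fin (r + 1) → ℝ) (s : Fin (r + 1) →₀ ℕ) : ℝ :=
  ∑ i, γ i * s i

def ltGamma (r : ℕ) (γ : Fin (r + 1) → ℝ) (s t : Fin (r + 1) →₀ ℕ) : Prop :=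
  wt r γ s < wt r γ t ∨
    (wt r γ s = wt r γ t ∧ ∃ i, (∀ j, j < i → s j = t j) ∧ s i < t i)

section aux
variable {r : ℕ} {γ : Fin (r + 1) → ℝ}

lemma wt_add (s t : Fin (r + 1) →₀ ℕ) : wt r γ (s + t) = wt r γ s + wt r γ t := by
  simp [wt, Finsupp.add_apply, mul_add, Finset.sum_add_distrib]

lemma wt_sum {ι : Type*} (s : Finset ι) (g : ι → (Fin (r + 1) →₀ ℕ)) :
    wt r γ (∑ i ∈ s, g i) = ∑ i ∈ s, wt r γ (g i) := by
  classical
  induction s using Finset.induction with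
  | empty => simp [wt]
  | insert _ _ h ih => rw [Finset.sum_insert h, Finset.sum_insert h, wt_add, ih]

lemma ltGamma_irrefl (s : Fin (r + 1) →₀ ℕ) : ¬ ltGamma r γ s s := by
  rintro (h | ⟨-, i, -, hi⟩)
  · exact lt_irrefl _ h
  · exact lt_irrefl _ hi

lemma ltGamma_trans {s t u : Fin (r + 1) →₀ ℕ} (h1 : ltGamma r γ s t)
    (h2 : ltGamma r γ t u) : ltGamma r γ s u := by
  rcases h1 with h1 | ⟨hw1, i, hji, hi⟩
  · rcases h2 with h2 | ⟨hw2, -⟩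
    · exact Or.inl (h1.trans h2)
    · exact Or.inl (hw2 ▸ h1)
  · rcases h2 with h2 | ⟨hw2, i', hji', hi'⟩
    · exact Or.inl (hw1 ▸ h2)
    · refine Or.inr ⟨hw1.trans hw2, ?_⟩
      rcases lt_trichotomy i i' with h | h | h
      · exact ⟨i, fun j hj => (hji j hj).trans (hji' j (hj.trans h)),
          lt_of_lt_of_le hi (le_of_eq (hji' i h))⟩
      · subst h
        exact ⟨i, fun j hj => (hji j hj).trans (hji' j hj), hi.trans hi'⟩
      · exact ⟨i', fun j hj => (hji j (hj.trans h)).trans (hji' j hj),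
          lt_of_le_of_lt (le_of_eq (hji i' h)) hi'⟩

lemma ltGamma_add_right {s t : Fin (r + 1) →₀ ℕ} (u : Fin (r + 1) →₀ ℕ)
    (h : ltGamma r γ s t) : ltGamma r γ (s + u) (t + u) := by
  rcases h with h | ⟨hw, i, hj, hi⟩
  · exact Or.inl (by rw [wt_add, wt_add]; linarith)
  · refine Or.inr ⟨by rw [wt_add, wt_add, hw], i, fun j hjlt => ?_, ?_⟩
    · simp [Finsupp.add_apply, hj j hjlt]
    · simpa [Finsupp.add_apply] using hi

lemma ltGamma_add_left {s t : Fin (r + 1) →₀ ℕ} (u : Fin (r + 1) →₀ ℕ)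
    (h : ltGamma r γ s t) : ltGamma r γ (u + s) (u + t) := by
  rw [add_comm u s, add_comm u t]; exact ltGamma_add_right u h

/-- `leG` -/
def leG (r : ℕ) (γ : Fin (r + 1) → ℝ) (s t : Fin (r + 1) →₀ ℕ) : Prop :=
  ltGamma r γ s t ∨ s = t

lemma leG_add_lt {a b c d : Fin (r + 1) →₀ ℕ} (h1 : leG r γ a b)
    (h2 : ltGamma r γ c d) : ltGamma r γ (a + c) (b + d) := by
  rcases h1 with h1 | rfl
  · exact ltGamma_trans (ltGamma_add_right c h1) (ltGamma_add_left b h2)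
  · exact ltGamma_add_left a h2

lemma leG_add_leG {a b c d : Fin (r + 1) →₀ ℕ} (h1 : leG r γ a b)
    (h2 : leG r γ c d) : leG r γ (a + c) (b + d) := by
  rcases h2 with h2 | rfl
  · exact Or.inl (leG_add_lt h1 h2)
  · rcases h1 with h1 | rfl
    · exact Or.inl (ltGamma_add_right c h1)
    · exact Or.inr rfl

lemma leG_sum {ι : Type*} (s : Finset ι) (g h : ι → (Fin (r + 1) →₀ ℕ))
    (hle : ∀ i ∈ s, leG r γ (g i) (h i)) :
    leG r γ (∑ i ∈ s, g i) (∑ i ∈ s, h i) := by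
  classical
  induction s using Finset.induction with
  | empty => exact Or.inr rfl
  | @insert a s ha ih =>
    rw [Finset.sum_insert ha, Finset.sum_insert ha]
    exact leG_add_leG (hle a (Finset.mem_insert_self a s))
      (ih fun i hi => hle i (Finset.mem_insert_of_mem hi))

lemma coeff_mono_mul_ne_zero {k : Type*} [Field k] {f : MvPolynomial (Fin (r + 1)) k}
    {t n : Fin (r + 1) →₀ ℕ} (h : coeff n (monomial t (1 : k) * f) ≠ 0) :
    ∃ s ∈ f.support, t + s = n := by
  rw [coeff_mul] at h
  obtain ⟨⟨u, v⟩, hmem, hne⟩ := Finset.exists_ne_zero_of_sum_ne_zero h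
  rw [Finset.HasAntidiagonal.mem_antidiagonal] at hmem
  rw [coeff_monomial] at hne
  by_cases hu : t = u
  · subst hu
    refine ⟨v, ?_, hmem⟩
    rw [mem_support_iff]
    intro h0
    simp [h0] at hne
  · simp [hu] at hne

end aux

/-- The leading wedge of the Plücker coordinates of `span{m·f : m ∈ M_D}` is
`⋀ᵢ (m_{i,D}·mα)`: its Plücker coordinate (a maximal minor of the coefficient matrix) is
nonzero, it has maximal `γ`-weight among the nonzero Plücker coordinates, and its total weight
is `|M_D|·⟨γ,exp mα⟩ + ⟨γ, Σᵢ exp(m_{i,D})⟩`. -/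
theorem stmt_6 (k : Type*) [Field k] (r d D N : ℕ) (γ : Fin (r + 1) → ℝ)
    (f : MvPolynomial (Fin (r + 1)) k) (hf : f ≠ 0) (hhom : f.IsHomogeneous d)
    (mα : Fin (r + 1) →₀ ℕ) (hα : mα ∈ f.support)
    (hmax : ∀ s ∈ f.support, s ≠ mα → ltGamma r γ s mα)
    (mD : Fin N → (Fin (r + 1) →₀ ℕ))
    (hmDdeg : ∀ i, (mD i).sum (fun _ e => e) = D)
    (hmDinj : Function.Injective mD)
    (hmDsurj : ∀ s : Fin (r + 1) →₀ ℕ, s.sum (fun _ e => e) = D → ∃ i, mD i = s)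
    (b : Fin N → (Fin (r + 1) →₀ ℕ)) (hb : ∀ i, b i = mD i + mα) :
    Matrix.det (fun i j : Fin N => coeff (b j) ((monomial (mD i) (1 : k)) * f)) ≠ 0 ∧
      (∀ a : Fin N → (Fin (r + 1) →₀ ℕ), Function.Injective a →
        (∀ j, (a j).sum (fun _ e => e) = d + D) →
        Matrix.det (fun i j : Fin N => coeff (a j) ((monomial (mD i) (1 : k)) * f)) ≠ 0 →
        wt r γ (∑ j, a j) ≤ wt r γ (∑ j, b j)) ∧
      wt r γ (∑ j, b j) = N * wt r γ mα + wt r γ (∑ i, mD i) := by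
  classical
  have hwle : ∀ s ∈ f.support, wt r γ s ≤ wt r γ mα := by
    intro s hs
    by_cases h : s = mα
    · exact le_of_eq (h ▸ rfl)
    · rcases hmax s hs h with h' | ⟨h', -⟩
      · exact h'.le
      · exact h'.le
  -- Part 3 first
  have part3 : wt r γ (∑ j, b j) = N * wt r γ mα + wt r γ (∑ i, mD i) := by
    rw [wt_sum, wt_sum]
    have : ∀ j : Fin N, wt r γ (b j) = wt r γ (mD j) + wt r γ mα := by
      intro j; rw [hb j, wt_add]
    rw [Finset.sum_congr rfl fun j _ => this j, Finset.sum_add_distrib,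
      Finset.sum_const, Finset.card_univ, Fintype.card_fin, nsmul_eq_mul]
    ring
  -- Part 1
  have part1 :
      Matrix.det (fun i j : Fin N => coeff (b j) ((monomial (mD i) (1 : k)) * f)) ≠ 0 := by
    erw [Matrix.det_apply]
    rw [Finset.sum_eq_single_of_mem (1 : Equiv.Perm (Fin N)) (Finset.mem_univ _)]
    · have hd : ∀ i : Fin N, coeff (b i) ((monomial (mD ((1 : Equiv.Perm (Fin N)) i)) (1 : k)) * f)
          = coeff mα f := by
        intro i
        simp only [Equiv.Perm.one_apply]
        rw [hb i, coeff_monomial_mul, one_mul]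
      simp only [Equiv.Perm.sign_one, one_smul]
      rw [Finset.prod_congr rfl fun i _ => hd i, Finset.prod_const]
      exact pow_ne_zero _ (mem_support_iff.mp hα)
    · intro σ _ hσ
      suffices hp0 : (∏ i, coeff (b i) ((monomial (mD (σ i)) (1 : k)) * f)) = 0 by
        rw [hp0, smul_zero]
      by_contra hp
      have hent : ∀ i : Fin N,
          coeff (b i) ((monomial (mD (σ i)) (1 : k)) * f) ≠ 0 := by
        intro i
        exact Finset.prod_ne_zero_iff.mp hp i (Finset.mem_univ i)
      choose s hs hsum using fun i => coeff_mono_mul_ne_zero (hent i)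
      -- sum equality
      have hsumeq : ∑ i, s i = ∑ _i : Fin N, mα := by
        have h1 : ∑ i, (mD (σ i) + s i) = ∑ i, (mD i + mα) := by
          refine Finset.sum_congr rfl fun i _ => ?_
          rw [hsum i, hb i]
        rw [Finset.sum_add_distrib, Finset.sum_add_distrib] at h1
        have h2 : ∑ i, mD (σ i) = ∑ i, mD i := Equiv.sum_comp σ mD
        rw [h2] at h1
        exact add_left_cancel h1
      have hall : ∀ i, s i = mα := by
        by_contra hc
        push_neg at hc
        obtain ⟨i0, hi0⟩ := hc
        have hlt : ltGamma r γ (s i0) mα := hmax _ (hs i0) hi0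
        have hle : ∀ i ∈ (Finset.univ.erase i0), leG r γ (s i) mα := by
          intro i _
          by_cases h : s i = mα
          · exact Or.inr h
          · exact Or.inl (hmax _ (hs i) h)
        have hstrict : ltGamma r γ (∑ i, s i) (∑ _i : Fin N, mα) := by
          rw [← Finset.add_sum_erase _ s (Finset.mem_univ i0),
            ← Finset.add_sum_erase _ (fun _ => mα) (Finset.mem_univ i0)]
          rw [add_comm (s i0), add_comm mα]
          exact leG_add_lt (leG_sum _ _ _ hle) hlt
        rw [hsumeq] at hstrict
        exact ltGamma_irrefl _ hstrict
      have hσid : σ = 1 := by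
        ext i
        have : mD (σ i) + mα = mD i + mα := by
          rw [← hall i, hsum i, hb i, hall i]
        have h' := hmDinj (add_right_cancel this)
        simp [h']
      exact hσ hσid
  refine ⟨part1, ?_, part3⟩
  -- Part 2
  intro a _ _ hdet
  erw [Matrix.det_apply] at hdet
  obtain ⟨σ, -, hσ⟩ := Finset.exists_ne_zero_of_sum_ne_zero hdet
  have hp : (∏ i, coeff (a i) ((monomial (mD (σ i)) (1 : k)) * f)) ≠ 0 := by
    intro h0
    rw [h0, smul_zero] at hσ
    exact hσ rfl
  have hent : ∀ i : Fin N, coeff (a i) ((monomial (mD (σ i)) (1 : k)) * f) ≠ 0 :=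
    fun i => Finset.prod_ne_zero_iff.mp hp i (Finset.mem_univ i)
  choose s hs hsum using fun i => coeff_mono_mul_ne_zero (hent i)
  have h1 : wt r γ (∑ j, a j) = (∑ j, wt r γ (mD j)) + ∑ j, wt r γ (s j) := by
    have : ∑ j, a j = ∑ j, (mD (σ j) + s j) :=
      (Finset.sum_congr rfl fun j _ => (hsum j).symm)
    rw [this, Finset.sum_add_distrib, wt_add, Equiv.sum_comp σ mD, wt_sum, wt_sum]
  have h2 : ∑ j, wt r γ (s j) ≤ N * wt r γ mα := by
    calc ∑ j : Fin N, wt r γ (s j) ≤ ∑ _j : Fin N, wt r γ mα :=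
          Finset.sum_le_sum fun j _ => hwle _ (hs j)
      _ = N * wt r γ mα := by
          rw [Finset.sum_const, Finset.card_univ, Fintype.card_fin, nsmul_eq_mul]
  have hmd : wt r γ (∑ i, mD i) = ∑ i, wt r γ (mD i) := wt_sum _ _
  rw [h1, part3]
  linarith
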